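/- Let f: ℝⁿ → ℝ be continuously differentiable, let {x^k} ⊂ ℝⁿ and {t_k} ⊂ (0,∞) with {t_k} bounded away from 0, let β > 0 and c > 0, and assume x^{k+1} ≠ x^k for all k and, for all sufficiently large k, f(x^k) − f(x^{k+1}) ≥ (β/t_k)‖x^{k+1} − x^k‖² and ‖∇f(x^k)‖ ≤ (c/t_k)‖x^{k+1} − x^k‖. Suppose x̄ is an accumulation point of {x^k} and f satisfies the KL property at x̄ with ψ(t) = M t^q for some M > 0 and q ∈ (0, 1/2]. Then {x^k} converges linearly to x̄, i.e., there exist C > 0 and ρ ∈ (0,1) such that ‖x^k − x̄‖ ≤ C ρ^k for all sufficiently large k. -/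

import Mathlib

open Filter

set_option maxHeartbeats 2000000 in
/-- Theorem 3.7(i): under the two descent-type conditions, stepsizes bounded away from
zero and the KL property with exponent `q ∈ (0, 1/2]` at an accumulation point `xbar`,
the sequence `{x^k}` converges linearly to `xbar`. -/
theorem stmt9 {n : ℕ} (f : EuclideanSpace ℝ (Fin n) → ℝ) (hf : ContDiff ℝ 1 f)
    (x : ℕ → EuclideanSpace ℝ (Fin n)) (t : ℕ → ℝ)
    (ht : ∀ k, 0 < t k)
    (tlow : ℝ) (htlow : 0 < tlow) (hlow : ∀ k, tlow ≤ t k)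
    (β c : ℝ) (hβ : 0 < β) (hc : 0 < c)
    (hne : ∀ k, x (k + 1) ≠ x k)
    (h1 : ∀ᶠ k in atTop, β / t k * ‖x (k + 1) - x k‖ ^ 2 ≤ f (x k) - f (x (k + 1)))
    (h2 : ∀ᶠ k in atTop, ‖gradient f (x k)‖ ≤ c / t k * ‖x (k + 1) - x k‖)
    (xbar : EuclideanSpace ℝ (Fin n))
    (hacc : ∃ φ : ℕ → ℕ, StrictMono φ ∧ Tendsto (x ∘ φ) atTop (nhds xbar))
    (M q : ℝ) (hM : 0 < M) (hq0 : 0 < q) (hq1 : q ≤ 1 / 2)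
    (hKL : ∃ η > (0 : ℝ), ∃ U ∈ nhds xbar, ∀ y ∈ U,
      f xbar < f y → f y < f xbar + η → M * (f y - f xbar) ^ q ≤ ‖gradient f y‖) :
    ∃ C > (0 : ℝ), ∃ ρ : ℝ, 0 < ρ ∧ ρ < 1 ∧
      ∀ᶠ k in atTop, ‖x k - xbar‖ ≤ C * ρ ^ k := by
  obtain ⟨φ, hφ, hφx⟩ := hacc
  obtain ⟨η, hη, U, hU, hKLp⟩ := hKL
  obtain ⟨ε, hε, hballU⟩ := Metric.mem_nhds_iff.mp hU
  set e : ℕ → ℝ := fun k => f (x k) - f xbar with he_def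
  clear_value e
  have he_app : ∀ k, e k = f (x k) - f xbar := fun k => by rw [he_def]
  obtain ⟨N₀, hN₀⟩ := eventually_atTop.mp (h1.and h2)
  have hfφ : Tendsto (fun j => f (x (φ j))) atTop (nhds (f xbar)) :=
    (hf.continuous.tendsto xbar).comp hφx
  have hdec : ∀ k, N₀ ≤ k → f (x (k + 1)) < f (x k) := by
    intro k hk
    have h := (hN₀ k hk).1
    have hΔ : 0 < ‖x (k + 1) - x k‖ := norm_pos_iff.mpr (sub_ne_zero.mpr (hne k))
    have := mul_pos (div_pos hβ (ht k)) (pow_pos hΔ 2)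
    linarith
  have hmono : ∀ k l, N₀ ≤ k → k ≤ l → f (x l) ≤ f (x k) := by
    intro k l hk hkl
    induction l, hkl using Nat.le_induction with
    | base => exact le_refl _
    | succ l hl ih => exact ((hdec l (hk.trans hl)).le).trans ih
  have hpos : ∀ k, N₀ ≤ k → f xbar < f (x k) := by
    intro k hk
    by_contra hcon
    push_neg at hcon
    have hlt : f (x (k + 1)) < f xbar := lt_of_lt_of_le (hdec k hk) hcon
    have hev : ∀ᶠ j in atTop, f (x (φ j)) ≤ f (x (k + 1)) := by
      filter_upwards [eventually_ge_atTop (k + 1)] with j hj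
      exact hmono (k + 1) (φ j) (by omega) (hj.trans hφ.le_apply)
    linarith [le_of_tendsto hfφ hev]
  have hflim : Tendsto (fun k => f (x k)) atTop (nhds (f xbar)) := by
    rw [Metric.tendsto_atTop]
    intro ε' hε'
    obtain ⟨j₀, hj₀⟩ := Metric.tendsto_atTop.mp hfφ ε' hε'
    refine ⟨φ (max j₀ N₀), fun k hk => ?_⟩
    have hN : N₀ ≤ φ (max j₀ N₀) := le_trans (le_max_right _ _) hφ.le_apply
    have h1' : f (x k) ≤ f (x (φ (max j₀ N₀))) := hmono _ _ hN hk
    have h2' : f xbar < f (x k) := hpos k (hN.trans hk)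
    have h3' := hj₀ (max j₀ N₀) (le_max_left _ _)
    rw [Real.dist_eq, abs_lt] at h3' ⊢
    constructor <;> linarith [h3'.1, h3'.2]
  have helim : Tendsto e atTop (nhds 0) := by
    rw [he_def]
    have := hflim.sub_const (f xbar)
    simpa using this
  have hsmall : ∀ᶠ k in atTop, e k < min η 1 :=
    helim.eventually_lt_const (lt_min hη one_pos)
  obtain ⟨N₁, hN₁⟩ := eventually_atTop.mp (hsmall.and (eventually_ge_atTop N₀))
  -- constants
  set γ : ℝ := β * tlow * M ^ 2 / c ^ 2 with hγdef
  have hγ : 0 < γ := by positivity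
  set ρ₀ : ℝ := 1 - min γ (1 / 2) with hρ₀def
  have hρ₀pos : 0 < ρ₀ := by
    have : min γ (1 / 2) ≤ 1 / 2 := min_le_right _ _
    rw [hρ₀def]; linarith
  have hρ₀lt : ρ₀ < 1 := by
    have : 0 < min γ (1 / 2) := lt_min hγ (by norm_num)
    rw [hρ₀def]; linarith
  set T : ℝ := c ^ 2 / (β * M ^ 2) with hTdef
  have hT : 0 < T := by positivity
  set K : ℝ := Real.sqrt (T / β) with hKdef
  have hK : 0 < K := Real.sqrt_pos.mpr (by positivity)
  set s : ℝ := Real.sqrt ρ₀ with hsdef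
  have hs0 : 0 < s := Real.sqrt_pos.mpr hρ₀pos
  have hs1 : s < 1 := by
    rw [hsdef, show (1 : ℝ) = Real.sqrt 1 by simp]
    exact Real.sqrt_lt_sqrt hρ₀pos.le hρ₀lt
  have h1s : 0 < 1 - s := by linarith
  have geo : ∀ nn : ℕ, ∑ i ∈ Finset.range nn, s ^ i ≤ (1 - s)⁻¹ := by
    intro nn
    have hsum := Summable.sum_le_tsum (Finset.range nn) (fun i _ => pow_nonneg hs0.le i)
      (summable_geometric_of_lt_one hs0.le hs1)
    rwa [tsum_geometric_of_lt_one hs0.le hs1] at hsum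
  have hsρpow : ∀ nn : ℕ, Real.sqrt (ρ₀ ^ nn) = s ^ nn := by
    intro nn
    rw [show ρ₀ ^ nn = (Real.sqrt ρ₀ ^ nn) ^ 2 by
        rw [pow_right_comm, Real.sq_sqrt hρ₀pos.le],
      Real.sqrt_sq (pow_nonneg (Real.sqrt_nonneg _) nn), hsdef]
  have hepos' : ∀ k, N₁ ≤ k → 0 < e k := fun k hk => by
    rw [he_app k]; exact sub_pos.mpr (hpos k (hN₁ k hk).2)
  -- key one-step estimate
  have key : ∀ k, N₁ ≤ k → ‖x k - xbar‖ < ε →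
      e (k + 1) ≤ ρ₀ * e k ∧ ‖x (k + 1) - x k‖ ≤ K * Real.sqrt (e k) := by
    intro k hk hkball
    have hxU : x k ∈ U := hballU (by rw [Metric.mem_ball, dist_eq_norm]; exact hkball)
    obtain ⟨hke, hkN₀⟩ := hN₁ k hk
    have hepos : 0 < e k := hepos' k hk
    have he1 : e k ≤ 1 := (lt_min_iff.mp hke).2.le
    have heη : e k < η := (lt_min_iff.mp hke).1
    have he1n : 0 ≤ e (k + 1) := by
      rw [he_app]; exact (sub_pos.mpr (hpos (k + 1) (by omega))).le
    have hgrad : M * (e k) ^ q ≤ ‖gradient f (x k)‖ := by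
      rw [he_app k]
      exact hKLp (x k) hxU (hpos k hkN₀) (by linarith [he_app k, heη])
    obtain ⟨hA, hB⟩ := hN₀ k hkN₀
    set d := ‖x (k + 1) - x k‖ with hddef
    have hd : 0 < d := norm_pos_iff.mpr (sub_ne_zero.mpr (hne k))
    have htk := ht k
    have htl := hlow k
    set E := (e k) ^ q with hEdef
    have hE : 0 < E := Real.rpow_pos_of_pos hepos q
    have hEE : e k ≤ E * E := by
      have h2' : e k ^ (1 : ℝ) ≤ e k ^ (q + q) :=
        Real.rpow_le_rpow_of_exponent_ge hepos he1 (by linarith)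
      rw [Real.rpow_one, Real.rpow_add hepos] at h2'
      exact h2'
    have hgrad2 : M * E ≤ c / t k * d := le_trans hgrad hB
    have step1 : t k * (M * E) ≤ c * d := by
      calc t k * (M * E) ≤ t k * (c / t k * d) :=
            mul_le_mul_of_nonneg_left hgrad2 htk.le
        _ = c * d := by field_simp
    have hA' : β / t k * d ^ 2 ≤ e k - e (k + 1) := by
      simp only [he_app]; linarith [hA]
    have step2 : β * d ^ 2 ≤ t k * (e k - e (k + 1)) := by
      have h0 : β * d ^ 2 = t k * (β / t k * d ^ 2) := by field_simp
      rw [h0]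
      exact mul_le_mul_of_nonneg_left hA' htk.le
    have hsq : (t k * (M * E)) * (t k * (M * E)) ≤ (c * d) * (c * d) :=
      mul_self_le_mul_self (by positivity) step1
    have h6 : β * (t k * (M ^ 2 * (E * E))) * t k ≤ c ^ 2 * (e k - e (k + 1)) * t k := by
      linarith [mul_le_mul_of_nonneg_left hsq hβ.le,
        mul_le_mul_of_nonneg_left step2 (sq_nonneg c)]
    have h7' : β * (t k * (M ^ 2 * (E * E))) ≤ c ^ 2 * (e k - e (k + 1)) :=
      le_of_mul_le_mul_right h6 htk
    have h7 : β * tlow * (M ^ 2 * (E * E)) ≤ c ^ 2 * (e k - e (k + 1)) := by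
      linarith [h7', mul_le_mul_of_nonneg_right htl
        (show (0 : ℝ) ≤ β * (M ^ 2 * (E * E)) by positivity)]
    have h8 : γ * (E * E) ≤ e k - e (k + 1) := by
      have hγc : γ * c ^ 2 = β * tlow * M ^ 2 := by
        rw [hγdef]; exact div_mul_cancel₀ _ (pow_ne_zero 2 hc.ne')
      have h8' : γ * (E * E) * c ^ 2 ≤ (e k - e (k + 1)) * c ^ 2 := by
        calc γ * (E * E) * c ^ 2 = (γ * c ^ 2) * (E * E) := by ring
          _ = β * tlow * M ^ 2 * (E * E) := by rw [hγc]
          _ = β * tlow * (M ^ 2 * (E * E)) := by ring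
          _ ≤ c ^ 2 * (e k - e (k + 1)) := h7
          _ = (e k - e (k + 1)) * c ^ 2 := by ring
      exact le_of_mul_le_mul_right h8' (by positivity)
    have edec : γ * e k ≤ e k - e (k + 1) :=
      le_trans (mul_le_mul_of_nonneg_left hEE hγ.le) h8
    have estep : e (k + 1) ≤ ρ₀ * e k := by
      have hmin : min γ (1 / 2) * e k ≤ γ * e k :=
        mul_le_mul_of_nonneg_right (min_le_left _ _) hepos.le
      have h9 : e (k + 1) ≤ e k - min γ (1 / 2) * e k := by linarith only [edec, hmin]
      calc e (k + 1) ≤ e k - min γ (1 / 2) * e k := h9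
        _ = ρ₀ * e k := by rw [hρ₀def]; ring
    have hd2 : β * d ^ 2 ≤ t k * e k := by
      have : t k * (e k - e (k + 1)) ≤ t k * e k :=
        mul_le_mul_of_nonneg_left (by linarith) htk.le
      linarith
    have h10 : β * (t k * (M ^ 2 * (E * E))) * t k ≤ c ^ 2 * e k * t k := by
      linarith [mul_le_mul_of_nonneg_left hsq hβ.le,
        mul_le_mul_of_nonneg_left hd2 (sq_nonneg c)]
    have h11 : β * (t k * (M ^ 2 * (E * E))) ≤ c ^ 2 * e k :=
      le_of_mul_le_mul_right h10 htk
    have h12 : (β * t k * M ^ 2) * (E * E) ≤ c ^ 2 * (E * E) := by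
      have h12' := mul_le_mul_of_nonneg_left hEE (sq_nonneg c)
      linarith [h11]
    have h13 : β * t k * M ^ 2 ≤ c ^ 2 := le_of_mul_le_mul_right h12 (mul_pos hE hE)
    have tkT : t k ≤ T := by
      rw [hTdef, le_div_iff₀ (by positivity)]
      linarith [h13]
    have hd3 : d ^ 2 ≤ T / β * e k := by
      rw [div_mul_eq_mul_div, le_div_iff₀ hβ]
      linarith [hd2, mul_le_mul_of_nonneg_right tkT hepos.le]
    have hdK : d ≤ K * Real.sqrt (e k) := by
      calc d = Real.sqrt (d ^ 2) := (Real.sqrt_sq hd.le).symm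
        _ ≤ Real.sqrt (T / β * e k) := Real.sqrt_le_sqrt hd3
        _ = K * Real.sqrt (e k) := by
            rw [Real.sqrt_mul (by positivity), hKdef]
    exact ⟨estep, hdK⟩
  -- choose the starting index m on the subsequence
  have heφ : Tendsto (fun j => e (φ j)) atTop (nhds 0) := by
    simp only [he_app]
    have := hfφ.sub_const (f xbar)
    simpa using this
  have hsq0 : Tendsto (fun j => K * Real.sqrt (e (φ j))) atTop (nhds 0) := by
    have h0 : Tendsto (fun j => Real.sqrt (e (φ j))) atTop (nhds 0) := by
      have := (Real.continuous_sqrt.tendsto 0).comp heφ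
      simpa [Function.comp_def] using this
    simpa using h0.const_mul K
  have hm1' : ∀ᶠ j in atTop, ‖x (φ j) - xbar‖ ≤ ε / 4 := by
    have h0 : Tendsto (fun j => ‖x (φ j) - xbar‖) atTop (nhds 0) := by
      have := (hφx.sub_const xbar).norm
      simpa using this
    exact h0.eventually_le_const (by positivity)
  have hm2' : ∀ᶠ j in atTop, K * Real.sqrt (e (φ j)) ≤ ε / 4 * (1 - s) :=
    hsq0.eventually_le_const (by positivity)
  have hm3' : ∀ᶠ j in atTop, N₁ ≤ φ j :=
    (eventually_ge_atTop N₁).mono fun j hj => hj.trans hφ.le_apply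
  obtain ⟨j₀, hj1, hj2, hj3⟩ := (hm1'.and (hm2'.and hm3')).exists
  set m := φ j₀ with hmdef
  have hquarter : ∀ nn : ℕ,
      K * Real.sqrt (e m) * (∑ i ∈ Finset.range nn, s ^ i) ≤ ε / 4 := by
    intro nn
    calc K * Real.sqrt (e m) * (∑ i ∈ Finset.range nn, s ^ i)
        ≤ K * Real.sqrt (e m) * (1 - s)⁻¹ :=
          mul_le_mul_of_nonneg_left (geo nn) (by positivity)
      _ ≤ ε / 4 * (1 - s) * (1 - s)⁻¹ :=
          mul_le_mul_of_nonneg_right hj2 (by positivity)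
      _ = ε / 4 := mul_inv_cancel_right₀ h1s.ne' _
  -- iterates starting from m stay in the ball and decrease geometrically
  have main : ∀ jj : ℕ, e (m + jj) ≤ ρ₀ ^ jj * e m ∧
      ‖x (m + jj) - xbar‖ ≤ ε / 4 + K * Real.sqrt (e m) * (∑ i ∈ Finset.range jj, s ^ i) := by
    intro jj
    induction jj with
    | zero => exact ⟨by simp, by simpa using hj1⟩
    | succ jj ih =>
      obtain ⟨ih1, ih2⟩ := ih
      have hin : ‖x (m + jj) - xbar‖ < ε := by
        have := hquarter jj
        linarith
      obtain ⟨k1, k2⟩ := key (m + jj) (hj3.trans (Nat.le_add_right m jj)) hin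
      have harr : m + (jj + 1) = (m + jj) + 1 := by omega
      constructor
      · rw [harr]
        calc e ((m + jj) + 1) ≤ ρ₀ * e (m + jj) := k1
          _ ≤ ρ₀ * (ρ₀ ^ jj * e m) := mul_le_mul_of_nonneg_left ih1 hρ₀pos.le
          _ = ρ₀ ^ (jj + 1) * e m := by ring
      · rw [harr]
        have hsq2 : Real.sqrt (e (m + jj)) ≤ s ^ jj * Real.sqrt (e m) := by
          calc Real.sqrt (e (m + jj)) ≤ Real.sqrt (ρ₀ ^ jj * e m) := Real.sqrt_le_sqrt ih1
            _ = Real.sqrt (ρ₀ ^ jj) * Real.sqrt (e m) := Real.sqrt_mul (by positivity) _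
            _ = s ^ jj * Real.sqrt (e m) := by rw [hsρpow jj]
        have hstep : ‖x ((m + jj) + 1) - x (m + jj)‖ ≤ K * (s ^ jj * Real.sqrt (e m)) :=
          k2.trans (mul_le_mul_of_nonneg_left hsq2 hK.le)
        calc ‖x ((m + jj) + 1) - xbar‖
            ≤ ‖x ((m + jj) + 1) - x (m + jj)‖ + ‖x (m + jj) - xbar‖ :=
              norm_sub_le_norm_sub_add_norm_sub _ _ _
          _ ≤ K * (s ^ jj * Real.sqrt (e m)) +
              (ε / 4 + K * Real.sqrt (e m) * (∑ i ∈ Finset.range jj, s ^ i)) :=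
              add_le_add hstep ih2
          _ = ε / 4 + K * Real.sqrt (e m) * (∑ i ∈ Finset.range (jj + 1), s ^ i) := by
              rw [Finset.sum_range_succ]; ring
  have hball2 : ∀ jj : ℕ, ‖x (m + jj) - xbar‖ < ε := by
    intro jj
    have := (main jj).2
    linarith [hquarter jj]
  have hsb : ∀ jj : ℕ, Real.sqrt (e (m + jj)) ≤ s ^ jj * Real.sqrt (e m) := by
    intro jj
    calc Real.sqrt (e (m + jj)) ≤ Real.sqrt (ρ₀ ^ jj * e m) := Real.sqrt_le_sqrt (main jj).1
      _ = Real.sqrt (ρ₀ ^ jj) * Real.sqrt (e m) := Real.sqrt_mul (by positivity) _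
      _ = s ^ jj * Real.sqrt (e m) := by rw [hsρpow jj]
  -- tail estimate
  have tail : ∀ jj dd : ℕ, ‖x (m + (jj + dd)) - x (m + jj)‖ ≤
      K * Real.sqrt (e m) * s ^ jj * (∑ i ∈ Finset.range dd, s ^ i) := by
    intro jj dd
    induction dd with
    | zero => simp
    | succ dd ih =>
      have harr : m + (jj + (dd + 1)) = (m + (jj + dd)) + 1 := by omega
      have hkey := key (m + (jj + dd)) (hj3.trans (Nat.le_add_right m _)) (hball2 (jj + dd))
      have hstep : ‖x ((m + (jj + dd)) + 1) - x (m + (jj + dd))‖ ≤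
          K * Real.sqrt (e m) * s ^ jj * s ^ dd := by
        have h0 := hkey.2.trans (mul_le_mul_of_nonneg_left (hsb (jj + dd)) hK.le)
        calc ‖x ((m + (jj + dd)) + 1) - x (m + (jj + dd))‖
            ≤ K * (s ^ (jj + dd) * Real.sqrt (e m)) := h0
          _ = K * Real.sqrt (e m) * s ^ jj * s ^ dd := by rw [pow_add]; ring
      rw [harr]
      calc ‖x ((m + (jj + dd)) + 1) - x (m + jj)‖
          ≤ ‖x ((m + (jj + dd)) + 1) - x (m + (jj + dd))‖ +
            ‖x (m + (jj + dd)) - x (m + jj)‖ :=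
            norm_sub_le_norm_sub_add_norm_sub _ _ _
        _ ≤ K * Real.sqrt (e m) * s ^ jj * s ^ dd +
            K * Real.sqrt (e m) * s ^ jj * (∑ i ∈ Finset.range dd, s ^ i) :=
            add_le_add hstep ih
        _ = K * Real.sqrt (e m) * s ^ jj * (∑ i ∈ Finset.range (dd + 1), s ^ i) := by
            rw [Finset.sum_range_succ]; ring
  -- conclusion
  have hem : 0 < e m := hepos' m hj3
  have hsm : 0 < Real.sqrt (e m) := Real.sqrt_pos.mpr hem
  refine ⟨K * Real.sqrt (e m) * (1 - s)⁻¹ / s ^ m, by positivity, s, hs0, hs1, ?_⟩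
  filter_upwards [eventually_ge_atTop m] with k hk
  obtain ⟨jj, rfl⟩ : ∃ jj, k = m + jj := ⟨k - m, by omega⟩
  have hlim2 : Tendsto (fun j' => ‖x (m + jj) - x (φ j')‖) atTop
      (nhds ‖x (m + jj) - xbar‖) :=
    (tendsto_const_nhds.sub hφx).norm
  have hev2 : ∀ᶠ j' in atTop,
      ‖x (m + jj) - x (φ j')‖ ≤ K * Real.sqrt (e m) * s ^ jj * (1 - s)⁻¹ := by
    filter_upwards [eventually_ge_atTop (m + jj)] with j' hj'
    have hmj : m + jj ≤ φ j' := hj'.trans hφ.le_apply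
    obtain ⟨dd, hdd⟩ : ∃ dd, φ j' = m + (jj + dd) := ⟨φ j' - (m + jj), by omega⟩
    rw [hdd, norm_sub_rev]
    exact (tail jj dd).trans (mul_le_mul_of_nonneg_left (geo dd) (by positivity))
  have hfin := le_of_tendsto hlim2 hev2
  have heq : K * Real.sqrt (e m) * (1 - s)⁻¹ / s ^ m * s ^ (m + jj) =
      K * Real.sqrt (e m) * s ^ jj * (1 - s)⁻¹ := by
    rw [pow_add]
    field_simp
  rw [heq]
  exact hfin
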